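/- Let F be a field, q a power of the characteristic, and let β(x:y:z) = (z:x:y), γ(x:y:z) = (x^q:y^q:z^q) be maps on the projective plane over the algebraic closure of F_q. A point P = (b:c:1) is fixed by β∘γ if and only if b^{q²+q+1} = 1, c = b^{q+1}, and b c^q = 1; in particular the fixed points of β∘γ with nonzero last coordinate are exactly the points (a^i : a^{(q+1)i} : 1) for a a fixed primitive (q²+q+1)-th root of unity in F_{q³} and 0 ≤ i ≤ q² + q. -/
import Mathlib


/-- Over the algebraic closure of F_q, with β(x:y:z)=(z:x:y) and
γ(x:y:z)=(x^q:y^q:z^q), a point (b:c:1) is fixed by β∘γ (i.e. (b:c:1)=(1:b^q:c^q)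
projectively) iff b^{q²+q+1}=1, c=b^{q+1} and b·c^q=1; and these fixed points are
exactly (a^i : a^{(q+1)i} : 1) for 0 ≤ i ≤ q²+q, a a primitive (q²+q+1)-th root
of unity. -/
theorem stmt4 {K : Type*} [Field K] [IsAlgClosed K] (p n q : ℕ)
    (hp : p.Prime) [CharP K p] (hq : q = p ^ n) (hn : 0 < n)
    (a : K) (ha : IsPrimitiveRoot a (q ^ 2 + q + 1)) :
    (∀ b c : K,
      (∃ l : K, l ≠ 0 ∧ b = l * 1 ∧ c = l * b ^ q ∧ (1 : K) = l * c ^ q) ↔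
        (b ^ (q ^ 2 + q + 1) = 1 ∧ c = b ^ (q + 1) ∧ b * c ^ q = 1)) ∧
    {bc : K × K |
        bc.1 ^ (q ^ 2 + q + 1) = 1 ∧ bc.2 = bc.1 ^ (q + 1) ∧ bc.1 * bc.2 ^ q = 1}
      = {bc : K × K | ∃ i : ℕ, i ≤ q ^ 2 + q ∧ bc = (a ^ i, a ^ ((q + 1) * i))} := by
  constructor
  · intro b c
    constructor
    · rintro ⟨l, hl, hb, hc, h1⟩
      rw [mul_one] at hb
      subst hb
      have hc' : c = b ^ (q + 1) := by rw [hc, ← pow_succ']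
      refine ⟨?_, hc', h1.symm⟩
      rw [hc', ← pow_mul, ← pow_succ'] at h1
      rw [show q ^ 2 + q + 1 = (q + 1) * q + 1 by ring]
      exact h1.symm
    · rintro ⟨h1, h2, h3⟩
      refine ⟨b, ?_, (mul_one b).symm, ?_, h3.symm⟩
      · intro h
        rw [h, zero_mul] at h3
        exact one_ne_zero h3.symm
      · rw [h2, ← pow_succ']
  · ext ⟨b, c⟩
    simp only [Set.mem_setOf_eq]
    constructor
    · rintro ⟨h1, h2, _⟩
      obtain ⟨i, hi, hb⟩ := ha.eq_pow_of_pow_eq_one h1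
      refine ⟨i, by omega, ?_⟩
      rw [Prod.ext_iff]
      constructor
      · exact hb.symm
      · rw [h2, ← hb, ← pow_mul, mul_comm]
    · rintro ⟨i, hi, heq⟩
      obtain ⟨hb, hc⟩ := Prod.mk.injEq .. ▸ heq
      subst hb
      refine ⟨?_, ?_, ?_⟩
      · rw [← pow_mul, mul_comm, pow_mul, ha.pow_eq_one, one_pow]
      · rw [hc, ← pow_mul, mul_comm]
      · rw [hc, ← pow_mul, ← pow_add,
          show i + (q + 1) * i * q = (q ^ 2 + q + 1) * i by ring, pow_mul,
          ha.pow_eq_one, one_pow]
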